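/- arXiv:2005.12995 — 2 statements merged into one kernel-verified Lean document; each statement's English description precedes it below -/
import Mathlib

section
/- For every w ∈ {0,1,…,n}, the kernel λ has the Krawtchouk expansion λ(w) = Σ_{k=0}^n λ̂_k·K_k^{(n)}(w), where λ̂_0 = Λ_n = (n/2^{n+1})·C(2n,n) and λ̂_k = −2^{−n}·Σ_{t=0}^{n−1} (K_t^{(n−1)}(k−1))² for k = 1,…,n. In particular, the kernel −λ is positive definite up to an additive constant. -/
/-- The Krawtchouk polynomial `K_k^{(n)}(x) = Σ_{i=0}^k (−1)^i·C(x,i)·C(n−x,k−i)`. -/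
def kraw (n k x : ℕ) : ℤ :=
  ∑ i ∈ Finset.range (k + 1),
    (-1 : ℤ) ^ i * (Nat.choose x i : ℤ) * (Nat.choose (n - x) (k - i) : ℤ)

/-- `λ(w) = 2^{n−w}·w·C(w−1, ⌈w/2⌉−1)` (so `λ(0) = 0`). -/
noncomputable def lam (n w : ℕ) : ℝ :=
  (2 : ℝ) ^ (n - w) * w * Nat.choose (w - 1) ((w + 1) / 2 - 1)

/-- The Krawtchouk coefficients of `λ`: `λ̂_0 = Λ_n = (n/2^{n+1})·C(2n,n)` and
`λ̂_k = −2^{−n}·Σ_{t=0}^{n−1} (K_t^{(n−1)}(k−1))²` for `k ≥ 1`. -/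
noncomputable def lamHat (n k : ℕ) : ℝ :=
  if k = 0 then (n : ℝ) / 2 ^ (n + 1) * Nat.choose (2 * n) n
  else -((2 : ℝ) ^ n)⁻¹ * ∑ t ∈ Finset.range n, ((kraw (n - 1) t (k - 1) : ℝ)) ^ 2

open Finset

lemma kraw_zero (n x : ℕ) : kraw n 0 x = 1 := by
  simp [kraw]

lemma kraw_x_zero (n k : ℕ) : kraw n k 0 = Nat.choose n k := by
  rw [kraw, Finset.sum_eq_single 0]
  · simp
  · intro i hi hne
    have : Nat.choose 0 i = 0 := Nat.choose_eq_zero_of_lt (Nat.pos_of_ne_zero hne)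
    simp [this]
  · simp

lemma kraw_eq_zero (m k x : ℕ) (hk : m < k) (hx : x ≤ m) : kraw m k x = 0 := by
  rw [kraw]
  apply Finset.sum_eq_zero
  intro i _
  rcases le_or_gt i x with h | h
  · have : m - x < k - i := by omega
    rw [Nat.choose_eq_zero_of_lt this]
    ring
  · rw [Nat.choose_eq_zero_of_lt h]
    ring

lemma kraw_pascal (m k x : ℕ) (hx : x ≤ m) :
    kraw (m+1) (k+1) x = kraw m (k+1) x + kraw m k x := by
  have hmx : m + 1 - x = (m - x) + 1 := by omega
  rw [kraw, kraw, kraw]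
  rw [Finset.sum_range_succ, Finset.sum_range_succ (n := k + 1)]
  have h1 : ∀ i ∈ Finset.range (k+1),
      (-1 : ℤ) ^ i * (Nat.choose x i : ℤ) * (Nat.choose (m + 1 - x) (k + 1 - i) : ℤ)
      = (-1 : ℤ) ^ i * (Nat.choose x i : ℤ) * (Nat.choose (m - x) (k + 1 - i) : ℤ)
        + (-1 : ℤ) ^ i * (Nat.choose x i : ℤ) * (Nat.choose (m - x) (k - i) : ℤ) := by
    intro i hi
    rw [Finset.mem_range] at hi
    have hki : k + 1 - i = (k - i) + 1 := by omega
    rw [hmx, hki, Nat.choose_succ_succ]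
    push_cast
    ring
  rw [Finset.sum_congr rfl h1, Finset.sum_add_distrib]
  have h2 : (Nat.choose (m + 1 - x) (k + 1 - (k+1)) : ℤ) = (Nat.choose (m - x) (k + 1 - (k+1)) : ℤ) := by
    simp
  rw [h2]
  ring

lemma kraw_pascal' (m k x : ℕ) :
    kraw (m+1) (k+1) (x+1) = kraw m (k+1) x - kraw m k x := by
  have hmx : m + 1 - (x + 1) = m - x := by omega
  rw [kraw, kraw, kraw, hmx]
  rw [Finset.sum_range_succ' (n := k + 1)]
  have h1 : ∀ i ∈ Finset.range (k+1),
      (-1 : ℤ) ^ (i+1) * (Nat.choose (x+1) (i+1) : ℤ) * (Nat.choose (m - x) (k + 1 - (i+1)) : ℤ)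
      = (-1 : ℤ) ^ (i+1) * (Nat.choose x (i+1) : ℤ) * (Nat.choose (m - x) (k + 1 - (i+1)) : ℤ)
        - (-1 : ℤ) ^ i * (Nat.choose x i : ℤ) * (Nat.choose (m - x) (k - i) : ℤ) := by
    intro i hi
    have hki : k + 1 - (i + 1) = k - i := by omega
    rw [Nat.choose_succ_succ, hki]
    push_cast
    ring
  rw [Finset.sum_congr rfl h1, Finset.sum_sub_distrib]
  rw [Finset.sum_range_succ' (n := k + 1)
    (f := fun i => (-1 : ℤ) ^ i * (Nat.choose x i : ℤ) * (Nat.choose (m - x) (k + 1 - i) : ℤ))]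
  simp
  ring

lemma sq_sum (m j : ℕ) (hj : j ≤ m) :
    ∑ t ∈ range (m+2), ((kraw (m+1) t j)^2 + (kraw (m+1) t (j+1))^2)
    = 4 * ∑ t ∈ range (m+1), (kraw m t j)^2 := by
  rw [Finset.sum_range_succ'
    (fun t => (kraw (m+1) t j)^2 + (kraw (m+1) t (j+1))^2) (m+1)]
  have h1 : ∀ u ∈ range (m+1),
      (kraw (m+1) (u+1) j)^2 + (kraw (m+1) (u+1) (j+1))^2
      = 2 * (kraw m (u+1) j)^2 + 2 * (kraw m u j)^2 := by
    intro u _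
    rw [kraw_pascal m u j hj, kraw_pascal' m u j]
    ring
  rw [Finset.sum_congr rfl h1, Finset.sum_add_distrib]
  have h2 : ∑ u ∈ range (m+1), 2 * (kraw m (u+1) j)^2
      = 2 * (∑ t ∈ range (m+1), (kraw m t j)^2) - 2 := by
    have h3 : ∑ u ∈ range (m+1), (kraw m (u+1) j)^2
        = (∑ t ∈ range (m+2), (kraw m t j)^2) - (kraw m 0 j)^2 := by
      rw [Finset.sum_range_succ' (fun t => (kraw m t j)^2) (m+1)]
      ring
    have h4 : (∑ t ∈ range (m+2), (kraw m t j)^2)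
        = ∑ t ∈ range (m+1), (kraw m t j)^2 := by
      rw [Finset.sum_range_succ, kraw_eq_zero m (m+1) j (by omega) hj]
      ring
    rw [← Finset.mul_sum, h3, h4, kraw_zero]
    ring
  have h5 : ∑ u ∈ range (m+1), 2 * (kraw m u j)^2
      = 2 * ∑ t ∈ range (m+1), (kraw m t j)^2 := by
    rw [Finset.mul_sum]
  rw [h2, h5]
  have h6 : (kraw (m+1) 0 j)^2 + (kraw (m+1) 0 (j+1))^2 = 2 := by
    rw [kraw_zero, kraw_zero]; ring
  rw [h6]
  ring

lemma S_zero (N k : ℕ) (hk : 1 ≤ k) :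
    ∑ w ∈ range (N+1), (Nat.choose N w : ℤ) * kraw N k w = 0 := by
  induction N generalizing k with
  | zero =>
    rw [Finset.sum_range_one, kraw_x_zero, Nat.choose_eq_zero_of_lt hk]
    simp
  | succ N ihN =>
    obtain ⟨k', rfl⟩ : ∃ k', k = k' + 1 := ⟨k - 1, by omega⟩
    rw [Finset.sum_range_succ'
      (fun w => (Nat.choose (N+1) w : ℤ) * kraw (N+1) (k'+1) w) (N+1)]
    have h1 : ∀ u ∈ range (N+1),
        (Nat.choose (N+1) (u+1) : ℤ) * kraw (N+1) (k'+1) (u+1)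
        = ((Nat.choose N u : ℤ) * kraw N (k'+1) u - (Nat.choose N u : ℤ) * kraw N k' u)
          + (Nat.choose N (u+1) : ℤ) * kraw (N+1) (k'+1) (u+1) := by
      intro u _
      rw [Nat.choose_succ_succ]
      push_cast
      rw [kraw_pascal' N k' u]
      ring
    rw [Finset.sum_congr rfl h1, Finset.sum_add_distrib, Finset.sum_sub_distrib]
    have h2 : ∑ u ∈ range (N+1), (Nat.choose N (u+1) : ℤ) * kraw (N+1) (k'+1) (u+1)
        = (∑ w ∈ range (N+2), (Nat.choose N w : ℤ) * kraw (N+1) (k'+1) w)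
          - (Nat.choose N 0 : ℤ) * kraw (N+1) (k'+1) 0 := by
      rw [Finset.sum_range_succ'
        (fun w => (Nat.choose N w : ℤ) * kraw (N+1) (k'+1) w) (N+1)]
      ring
    have h3 : ∑ w ∈ range (N+2), (Nat.choose N w : ℤ) * kraw (N+1) (k'+1) w
        = (∑ w ∈ range (N+1), (Nat.choose N w : ℤ) * kraw N (k'+1) w)
          + ∑ w ∈ range (N+1), (Nat.choose N w : ℤ) * kraw N k' w := by
      rw [Finset.sum_range_succ, Nat.choose_eq_zero_of_lt (by omega : N < N+1)]
      push_cast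
      rw [zero_mul, add_zero, ← Finset.sum_add_distrib]
      apply Finset.sum_congr rfl
      intro w hw
      rw [Finset.mem_range] at hw
      rw [kraw_pascal N k' w (by omega)]
      ring
    rw [h2, h3, ihN (k'+1) (by omega)]
    simp only [kraw_x_zero, Nat.choose_zero_right, Nat.cast_one]
    ring

lemma central_succ (n : ℕ) :
    (n+1) * Nat.choose (2*(n+1)) (n+1) = 2*(2*n+1) * Nat.choose (2*n) n := by
  have h0 : 2*(n+1) = (2*n+1) + 1 := by ring
  have h1 : Nat.choose (2*(n+1)) (n+1) = Nat.choose (2*n+1) n + Nat.choose (2*n+1) (n+1) := by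
    rw [h0, Nat.choose_succ_succ]
  have hsymm : Nat.choose (2*n+1) (n+1) = Nat.choose (2*n+1) n := by
    rw [← Nat.choose_symm (by omega : n + 1 ≤ 2*n+1)]
    congr 1
    omega
  have h2 : (2*n+1) * Nat.choose (2*n) n = Nat.choose (2*n+1) (n+1) * (n+1) :=
    Nat.add_one_mul_choose_eq (2*n) n
  calc (n+1) * Nat.choose (2*(n+1)) (n+1)
      = (n+1) * (2 * Nat.choose (2*n+1) (n+1)) := by rw [h1, hsymm]; ring
    _ = 2 * (Nat.choose (2*n+1) (n+1) * (n+1)) := by ring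
    _ = 2*(2*n+1) * Nat.choose (2*n) n := by rw [← h2]; ring

lemma sum_choose_sq (n : ℕ) :
    ∑ t ∈ range (n+1), (Nat.choose n t)^2 = Nat.choose (2*n) n := by
  have h := Nat.add_choose_eq n n n
  rw [two_mul, h, Finset.Nat.sum_antidiagonal_eq_sum_range_succ_mk]
  apply Finset.sum_congr rfl
  intro i hi
  rw [Finset.mem_range] at hi
  have h2 : n.choose (n - i) = n.choose i := Nat.choose_symm (by omega)
  show n.choose i ^ 2 = n.choose i * n.choose (n - i)
  rw [h2]; ring

/-- walk-count function -/
def Nfun (v s : ℕ) : ℕ := if (v + s) % 2 = 0 then Nat.choose v ((v + s) / 2) else 0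

lemma Nfun_succ (v s : ℕ) : Nfun (v+1) (s+1) = Nfun v (s+2) + Nfun v s := by
  unfold Nfun
  rcases Nat.even_or_odd (v + s) with h | h
  · rw [Nat.even_iff] at h
    have h1 : (v + 1 + (s+1)) % 2 = 0 := by omega
    have h2 : (v + (s+2)) % 2 = 0 := by omega
    rw [if_pos h1, if_pos h2, if_pos h]
    have e1 : (v + 1 + (s+1)) / 2 = (v + s) / 2 + 1 := by omega
    have e2 : (v + (s+2)) / 2 = (v + s) / 2 + 1 := by omega
    rw [e1, e2, Nat.choose_succ_succ]
    simp only [Nat.succ_eq_add_one]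
    omega
  · rw [Nat.odd_iff] at h
    have h1 : ¬ (v + 1 + (s+1)) % 2 = 0 := by omega
    have h2 : ¬ (v + (s+2)) % 2 = 0 := by omega
    have h3 : ¬ (v + s) % 2 = 0 := by omega
    rw [if_neg h1, if_neg h2, if_neg h3]

lemma Nfun_succ_zero (v : ℕ) : Nfun (v+1) 0 = 2 * Nfun v 1 := by
  unfold Nfun
  rcases Nat.even_or_odd v with h | h
  · rw [Nat.even_iff] at h
    have h1 : ¬ (v + 1 + 0) % 2 = 0 := by omega
    have h2 : ¬ (v + 1) % 2 = 0 := by omega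
    rw [if_neg h1, if_neg h2]
  · rw [Nat.odd_iff] at h
    have h1 : (v + 1 + 0) % 2 = 0 := by omega
    rw [if_pos h1, if_pos h1]
    have e1 : (v + 1 + 0) / 2 = (v - 1) / 2 + 1 := by omega
    rw [e1, Nat.choose_succ_succ]
    have hs : Nat.choose v ((v-1)/2) = Nat.choose v ((v-1)/2 + 1) := by
      rw [← Nat.choose_symm (by omega : (v-1)/2 ≤ v)]
      congr 1
      omega
    simp only [Nat.succ_eq_add_one]
    omega

lemma Nfun_eq_zero (v s : ℕ) (h : v < s) : Nfun v s = 0 := by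
  unfold Nfun
  split
  · apply Nat.choose_eq_zero_of_lt
    omega
  · rfl

lemma A_zero (m s : ℕ) (h : m < s) :
    ∑ v ∈ range (m+1), Nat.choose m v * 2^(m-v) * Nfun v s = 0 := by
  apply Finset.sum_eq_zero
  intro v hv
  rw [Finset.mem_range] at hv
  rw [Nfun_eq_zero v s (by omega)]
  ring

lemma A_eq : ∀ m : ℕ, ∀ s : ℕ, s ≤ m →
    ∑ v ∈ range (m+1), Nat.choose m v * 2^(m-v) * Nfun v s = Nat.choose (2*m) (m - s) := by
  intro m
  induction m with
  | zero =>
    intro s hs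
    interval_cases s
    simp [Nfun]
  | succ m ih =>
    intro s hs
    have hsplit : ∑ v ∈ range (m+2), Nat.choose (m+1) v * 2^(m+1-v) * Nfun v s
        = (∑ u ∈ range (m+1), Nat.choose (m+1) (u+1) * 2^(m+1-(u+1)) * Nfun (u+1) s)
          + Nat.choose (m+1) 0 * 2^(m+1-0) * Nfun 0 s :=
      Finset.sum_range_succ' _ (m+1)
    have hQ : (∑ u ∈ range (m+1), Nat.choose m (u+1) * 2^(m+1-(u+1)) * Nfun (u+1) s)
        + Nat.choose (m+1) 0 * 2^(m+1-0) * Nfun 0 s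
        = 2 * ∑ v ∈ range (m+1), Nat.choose m v * 2^(m-v) * Nfun v s := by
      have : (∑ u ∈ range (m+1), Nat.choose m (u+1) * 2^(m+1-(u+1)) * Nfun (u+1) s)
          + Nat.choose m 0 * 2^(m+1-0) * Nfun 0 s
          = ∑ v ∈ range (m+2), Nat.choose m v * 2^(m+1-v) * Nfun v s :=
        (Finset.sum_range_succ' (fun v => Nat.choose m v * 2^(m+1-v) * Nfun v s) (m+1)).symm
      rw [show Nat.choose (m+1) 0 = Nat.choose m 0 by simp, this,
        Finset.sum_range_succ]
      rw [Nat.choose_eq_zero_of_lt (by omega : m < m+1), Finset.mul_sum]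
      simp only [zero_mul, add_zero]
      apply Finset.sum_congr rfl
      intro v hv
      rw [Finset.mem_range] at hv
      have : m + 1 - v = (m - v) + 1 := by omega
      rw [this, pow_succ]
      ring
    have hP : ∀ g : ℕ → ℕ,
        (∀ u, Nfun (u+1) s = g u) →
        ∑ u ∈ range (m+1), Nat.choose m u * 2^(m+1-(u+1)) * Nfun (u+1) s
        = ∑ u ∈ range (m+1), Nat.choose m u * 2^(m-u) * g u := by
      intro g hg
      apply Finset.sum_congr rfl
      intro u hu
      rw [hg u]
      have : m + 1 - (u + 1) = m - u := by omega
      rw [this]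
    -- combine Pascal
    have hpascal : ∑ v ∈ range (m+2), Nat.choose (m+1) v * 2^(m+1-v) * Nfun v s
        = (∑ u ∈ range (m+1), Nat.choose m u * 2^(m+1-(u+1)) * Nfun (u+1) s)
          + 2 * ∑ v ∈ range (m+1), Nat.choose m v * 2^(m-v) * Nfun v s := by
      rw [hsplit, ← hQ]
      have : ∀ u ∈ range (m+1), Nat.choose (m+1) (u+1) * 2^(m+1-(u+1)) * Nfun (u+1) s
          = Nat.choose m u * 2^(m+1-(u+1)) * Nfun (u+1) s
            + Nat.choose m (u+1) * 2^(m+1-(u+1)) * Nfun (u+1) s := by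
        intro u hu
        rw [Nat.choose_succ_succ]
        ring
      rw [Finset.sum_congr rfl this, Finset.sum_add_distrib]
      ring
    rcases Nat.eq_zero_or_pos s with rfl | hspos
    · -- s = 0
      rw [hpascal, hP (fun u => 2 * Nfun u 1) (fun u => Nfun_succ_zero u)]
      have e1 : ∑ u ∈ range (m+1), Nat.choose m u * 2^(m-u) * (2 * Nfun u 1)
          = 2 * ∑ u ∈ range (m+1), Nat.choose m u * 2^(m-u) * Nfun u 1 := by
        rw [Finset.mul_sum]; apply Finset.sum_congr rfl; intro u hu; ring
      rw [e1]
      rcases Nat.eq_zero_or_pos m with rfl | hm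
      · rw [A_zero 0 1 (by omega), ih 0 (le_refl 0)]
        simp
      · rw [ih 1 hm, ih 0 (by omega)]
        have h1 : Nat.choose (2*(m+1)) (m+1-0) = Nat.choose (2*m+1) m + Nat.choose (2*m+1) (m+1) := by
          have : 2*(m+1) = (2*m+1)+1 := by ring
          rw [this, show m+1-0 = m+1 from rfl, Nat.choose_succ_succ]
        have h2 : Nat.choose (2*m+1) m = Nat.choose (2*m) (m-1) + Nat.choose (2*m) m := by
          obtain ⟨p, rfl⟩ : ∃ p, m = p + 1 := ⟨m - 1, by omega⟩
          have e : 2*(p+1)+1 = (2*(p+1))+1 := rfl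
          rw [show p+1 = p+1 from rfl, Nat.choose_succ_succ (2*(p+1)) p]
          simp only [Nat.succ_eq_add_one, Nat.add_sub_cancel]
        have h3 : Nat.choose (2*m+1) (m+1) = Nat.choose (2*m) m + Nat.choose (2*m) (m+1) := by
          rw [show 2*m+1 = (2*m)+1 from rfl, Nat.choose_succ_succ]
        have h4 : Nat.choose (2*m) (m+1) = Nat.choose (2*m) (m-1) := by
          rw [← Nat.choose_symm (by omega : m+1 ≤ 2*m)]
          congr 1
          omega
        rw [h1, h2, h3, h4]
        rw [show m - 0 = m from rfl]
        ring
    · -- s ≥ 1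
      obtain ⟨s', rfl⟩ : ∃ s', s = s' + 1 := ⟨s - 1, by omega⟩
      rw [hpascal, hP (fun u => Nfun u (s'+2) + Nfun u s') (fun u => Nfun_succ u s')]
      have e1 : ∑ u ∈ range (m+1), Nat.choose m u * 2^(m-u) * (Nfun u (s'+2) + Nfun u s')
          = (∑ u ∈ range (m+1), Nat.choose m u * 2^(m-u) * Nfun u (s'+2))
            + ∑ u ∈ range (m+1), Nat.choose m u * 2^(m-u) * Nfun u s' := by
        rw [← Finset.sum_add_distrib]; apply Finset.sum_congr rfl; intro u hu; ring
      rw [e1]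
      rcases lt_or_ge m (s'+1) with hcase | hcase
      · -- s = m+1
        have hs'm : m = s' := by omega
        subst hs'm
        rw [A_zero m (m+2) (by omega), A_zero m (m+1) (by omega), ih m (le_refl m)]
        simp
      · -- s'+1 ≤ m
        rw [ih s' (by omega)]
        rcases lt_or_ge m (s'+2) with hcase2 | hcase2
        · -- s'+1 = m, i.e. s = m
          have hs'm : s' + 1 = m := by omega
          rw [A_zero m (s'+2) (by omega), ih (s'+1) (by omega)]
          have h1 : m - (s'+1) = 0 := by omega
          have h2 : m - s' = 1 := by omega
          have h3 : m + 1 - (s'+1) = 1 := by omega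
          rw [h1, h2, h3]
          have h4 : Nat.choose (2*(m+1)) 1 = 2*(m+1) := Nat.choose_one_right _
          have h5 : Nat.choose (2*m) 1 = 2*m := Nat.choose_one_right _
          rw [h4, h5, Nat.choose_zero_right]
          omega
        · -- s'+2 ≤ m: generic case
          rw [ih (s'+2) (by omega), ih (s'+1) (by omega)]
          have h1 : Nat.choose (2*(m+1)) (m+1-(s'+1))
              = Nat.choose (2*m+1) (m-(s'+1)) + Nat.choose (2*m+1) (m-s') := by
            have e2 : 2*(m+1) = (2*m+1)+1 := by ring
            have e3 : m+1-(s'+1) = (m-(s'+1))+1 := by omega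
            have e4 : m - (s'+1) + 1 = m - s' := by omega
            rw [e2, e3, Nat.choose_succ_succ]
            simp only [Nat.succ_eq_add_one]
            rw [e4]
          have h2 : Nat.choose (2*m+1) (m-(s'+1)) = Nat.choose (2*m) (m-(s'+2)) + Nat.choose (2*m) (m-(s'+1)) := by
            have e5 : m-(s'+1) = (m-(s'+2))+1 := by omega
            rw [e5, show 2*m+1 = (2*m)+1 from rfl, Nat.choose_succ_succ]
          have h3 : Nat.choose (2*m+1) (m-s') = Nat.choose (2*m) (m-(s'+1)) + Nat.choose (2*m) (m-s') := by
            have e6 : m-s' = (m-(s'+1))+1 := by omega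
            rw [e6, show 2*m+1 = (2*m)+1 from rfl, Nat.choose_succ_succ]
          rw [h1, h2, h3]
          ring

/-- generic Pascal split for binomially-weighted sums -/
lemma split_sum (m : ℕ) (f : ℕ → ℕ) :
    ∑ v ∈ range (m+2), Nat.choose (m+1) v * 2^(m+1-v) * f v
    = 2 * (∑ v ∈ range (m+1), Nat.choose m v * 2^(m-v) * f v)
      + ∑ u ∈ range (m+1), Nat.choose m u * 2^(m-u) * f (u+1) := by
  rw [Finset.sum_range_succ' (fun v => Nat.choose (m+1) v * 2^(m+1-v) * f v) (m+1)]
  have h1 : ∀ u ∈ range (m+1),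
      Nat.choose (m+1) (u+1) * 2^(m+1-(u+1)) * f (u+1)
      = Nat.choose m u * 2^(m-u) * f (u+1) + Nat.choose m (u+1) * 2^(m+1-(u+1)) * f (u+1) := by
    intro u hu
    rw [Nat.choose_succ_succ]
    have : m + 1 - (u+1) = m - u := by omega
    rw [this]
    ring
  rw [Finset.sum_congr rfl h1, Finset.sum_add_distrib]
  have h2 : (∑ u ∈ range (m+1), Nat.choose m (u+1) * 2^(m+1-(u+1)) * f (u+1))
      + Nat.choose (m+1) 0 * 2^(m+1-0) * f 0
      = 2 * ∑ v ∈ range (m+1), Nat.choose m v * 2^(m-v) * f v := by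
    have h3 : (∑ u ∈ range (m+1), Nat.choose m (u+1) * 2^(m+1-(u+1)) * f (u+1))
        + Nat.choose m 0 * 2^(m+1-0) * f 0
        = ∑ v ∈ range (m+2), Nat.choose m v * 2^(m+1-v) * f v :=
      (Finset.sum_range_succ' (fun v => Nat.choose m v * 2^(m+1-v) * f v) (m+1)).symm
    rw [show Nat.choose (m+1) 0 = Nat.choose m 0 by simp, h3, Finset.sum_range_succ,
      Nat.choose_eq_zero_of_lt (by omega : m < m+1), Finset.mul_sum]
    simp only [zero_mul, add_zero]
    apply Finset.sum_congr rfl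
    intro v hv
    rw [Finset.mem_range] at hv
    have : m + 1 - v = (m - v) + 1 := by omega
    rw [this, pow_succ]
    ring
  omega

def cfun (w : ℕ) : ℕ := w * Nat.choose (w - 1) ((w + 1) / 2 - 1)

lemma cfun_succ (w : ℕ) : cfun (w+1) = 2 * cfun w + Nfun w 0 := by
  unfold cfun Nfun
  rcases Nat.even_or_odd w with h | h
  · rw [Nat.even_iff] at h
    rw [if_pos (by omega : (w + 0) % 2 = 0)]
    rcases Nat.eq_zero_or_pos w with rfl | hw
    · simp
    · obtain ⟨m, rfl⟩ : ∃ m, w = 2*m := ⟨w/2, by omega⟩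
      have hm : 0 < m := by omega
      have e1 : (2*m+1+1)/2 - 1 = m := by omega
      have e2 : (2*m+1)/2 - 1 = m - 1 := by omega
      have e3 : 2*m+1-1 = 2*m := by omega
      have e4 : 2*m-1+1 = 2*m := by omega
      have e5 : (2*m+0)/2 = m := by omega
      rw [e1, e2, e3, e5]
      -- goal: (2m+1) * C(2m, m) = 2*(2m * C(2m-1, m-1)) + C(2m, m)
      have key : Nat.choose (2*m) m = 2 * Nat.choose (2*m-1) (m-1) := by
        obtain ⟨p, rfl⟩ : ∃ p, m = p + 1 := ⟨m-1, by omega⟩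
        have g1 : Nat.choose (2*(p+1)) (p+1) = Nat.choose (2*p+1) p + Nat.choose (2*p+1) (p+1) := by
          rw [show 2*(p+1) = (2*p+1)+1 by ring, Nat.choose_succ_succ]
        have f4 : Nat.choose (2*p+1) (p+1) = Nat.choose (2*p+1) p := by
          rw [← Nat.choose_symm (by omega : p+1 ≤ 2*p+1)]
          congr 1
          omega
        have g2 : 2*(p+1)-1 = 2*p+1 := by omega
        have g3 : p+1-1 = p := by omega
        rw [g2, g3]
        omega
      rw [key]
      ring
  · rw [Nat.odd_iff] at h
    rw [if_neg (by omega : ¬ (w + 0) % 2 = 0)]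
    obtain ⟨m, rfl⟩ : ∃ m, w = 2*m+1 := ⟨w/2, by omega⟩
    have e1 : (2*m+1+1+1)/2 - 1 = m := by omega
    have e2 : (2*m+1+1)/2 - 1 = m := by omega
    have e3 : 2*m+1+1-1 = 2*m+1 := by omega
    have e4 : 2*m+1-1 = 2*m := by omega
    rw [e1, e2, e3, e4]
    -- goal: (2m+2) * C(2m+1, m) = 2*((2m+1) * C(2m, m)) + 0
    have key : (m+1) * Nat.choose (2*m+1) m = (2*m+1) * Nat.choose (2*m) m := by
      have f1 : Nat.choose (2*m+1) m = Nat.choose (2*m+1) (m+1) := by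
        rw [← Nat.choose_symm (by omega : m+1 ≤ 2*m+1)]
        congr 1
        omega
      have f2 := Nat.add_one_mul_choose_eq (2*m) m
      rw [f1, f2]
      ring
    have : (2*m+1+1) * Nat.choose (2*m+1) m = 2 * ((m+1) * Nat.choose (2*m+1) m) := by ring
    rw [this, key]
    ring

lemma T_eq : ∀ n : ℕ,
    2 * ∑ w ∈ range (n+1), Nat.choose n w * 2^(n-w) * cfun w = n * Nat.choose (2*n) n := by
  intro n
  induction n with
  | zero => simp [cfun]
  | succ n ih =>
    rw [split_sum n cfun]
    have h1 : ∑ u ∈ range (n+1), Nat.choose n u * 2^(n-u) * cfun (u+1)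
        = 2 * (∑ u ∈ range (n+1), Nat.choose n u * 2^(n-u) * cfun u)
          + ∑ u ∈ range (n+1), Nat.choose n u * 2^(n-u) * Nfun u 0 := by
      have : ∀ u ∈ range (n+1), Nat.choose n u * 2^(n-u) * cfun (u+1)
          = 2 * (Nat.choose n u * 2^(n-u) * cfun u) + Nat.choose n u * 2^(n-u) * Nfun u 0 := by
        intro u hu
        rw [cfun_succ]
        ring
      rw [Finset.sum_congr rfl this, Finset.sum_add_distrib, Finset.mul_sum]
    rw [h1, A_eq n 0 (by omega)]
    have h2 := central_succ n
    simp only [Nat.sub_zero, Nat.succ_eq_add_one] at *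
    linarith [ih, h2]

lemma lam_eq_cast (n w : ℕ) : lam n w = ((2^(n-w) * cfun w : ℕ) : ℝ) := by
  unfold lam cfun
  push_cast
  ring

lemma lam_double (n w : ℕ) (hw : w ≤ n) : lam (n+1) w = 2 * lam n w := by
  unfold lam
  have : n + 1 - w = (n - w) + 1 := by omega
  rw [this, pow_succ]
  ring

lemma lam_weighted (n : ℕ) :
    ∑ w ∈ range (n+1), (Nat.choose n w : ℝ) * lam n w = 2^n * lamHat n 0 := by
  have h := T_eq n
  have hcast : ∑ w ∈ range (n+1), (Nat.choose n w : ℝ) * lam n w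
      = ((∑ w ∈ range (n+1), Nat.choose n w * 2^(n-w) * cfun w : ℕ) : ℝ) := by
    push_cast
    apply Finset.sum_congr rfl
    intro w hw
    rw [lam_eq_cast]
    push_cast
    ring
  rw [hcast]
  rw [lamHat, if_pos rfl]
  have h2 : 2 * ((∑ w ∈ range (n+1), Nat.choose n w * 2^(n-w) * cfun w : ℕ) : ℝ)
      = (n : ℝ) * (Nat.choose (2*n) n : ℝ) := by
    exact_mod_cast congrArg (fun x : ℕ => (x : ℝ)) h
  have h3 : (2:ℝ)^n * ((n : ℝ) / 2 ^ (n + 1) * (Nat.choose (2*n) n : ℝ))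
      = ((n:ℝ) * (Nat.choose (2*n) n : ℝ)) / 2 := by
    rw [pow_succ]
    have : (2:ℝ)^n ≠ 0 := by positivity
    field_simp
  rw [h3, ← h2]
  ring

lemma lamHat_pair (n k : ℕ) (hk : k ≤ n) :
    lamHat (n+1) k + lamHat (n+1) (k+1) = 2 * lamHat n k := by
  rcases Nat.eq_zero_or_pos k with rfl | hkpos
  · rw [lamHat, lamHat, lamHat, if_pos rfl, if_pos rfl,
      if_neg (by omega : ¬ (0:ℕ)+1 = 0)]
    have e1 : ∑ t ∈ range (n+1), ((kraw (n+1-1) t (0+1-1) : ℝ))^2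
        = ((Nat.choose (2*n) n : ℕ) : ℝ) := by
      rw [← sum_choose_sq n]
      push_cast
      apply Finset.sum_congr rfl
      intro t ht
      rw [kraw_x_zero]
      push_cast
      ring
    rw [e1]
    have hc : ((n:ℝ)+1) * (Nat.choose (2*(n+1)) (n+1) : ℝ)
        = 2*(2*(n:ℝ)+1) * (Nat.choose (2*n) n : ℝ) := by
      exact_mod_cast congrArg (fun x : ℕ => (x : ℝ)) (central_succ n)
    have hp1 : (2:ℝ)^(n+1) ≠ 0 := by positivity
    have hp2 : (2:ℝ)^(n+1+1) ≠ 0 := by positivity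
    push_cast
    push_cast at hc
    field_simp
    linear_combination ((2:ℝ) * 2^n) * hc
  · obtain ⟨m, rfl⟩ : ∃ m, n = m + 1 := ⟨n-1, by omega⟩
    obtain ⟨k', rfl⟩ : ∃ k', k = k' + 1 := ⟨k-1, by omega⟩
    rw [lamHat, lamHat, lamHat,
      if_neg (by omega : ¬ k'+1 = 0), if_neg (by omega : ¬ k'+1+1 = 0),
      if_neg (by omega : ¬ k'+1 = 0)]
    have hs := sq_sum m k' (by omega)
    have hs' : (∑ t ∈ range (m+2), ((kraw (m+1) t k' : ℝ))^2)
        + (∑ t ∈ range (m+2), ((kraw (m+1) t (k'+1) : ℝ))^2)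
        = 4 * ∑ t ∈ range (m+1), ((kraw m t k' : ℝ))^2 := by
      have := congrArg (fun x : ℤ => (x : ℝ)) hs
      push_cast at this
      rw [Finset.sum_add_distrib] at this
      exact this
    have e2 : m+1+1-1 = m+1 := rfl
    have e3 : k'+1-1 = k' := rfl
    have e4 : k'+1+1-1 = k'+1 := rfl
    have e5 : m+1-1 = m := rfl
    rw [e2, e3, e4, e5]
    set S1 := ∑ t ∈ range (m+2), ((kraw (m+1) t k' : ℝ))^2 with hS1
    set S2 := ∑ t ∈ range (m+2), ((kraw (m+1) t (k'+1) : ℝ))^2 with hS2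
    set S3 := ∑ t ∈ range (m+1), ((kraw m t k' : ℝ))^2 with hS3
    have e6 : -((2:ℝ)^(m+1+1))⁻¹ * S1 + -((2:ℝ)^(m+1+1))⁻¹ * S2
        = -((2:ℝ)^(m+1+1))⁻¹ * (S1 + S2) := by ring
    rw [e6, hs']
    rw [show (2:ℝ)^(m+1+1) = 2 * 2^(m+1) by ring]
    have hp : (2:ℝ)^(m+1) ≠ 0 := by positivity
    field_simp
    ring

lemma lamHat_nonpos (n k : ℕ) (hk : 1 ≤ k) : lamHat n k ≤ 0 := by
  rw [lamHat, if_neg (by omega : ¬ k = 0)]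
  have h1 : (0:ℝ) ≤ ∑ t ∈ range n, ((kraw (n-1) t (k-1) : ℝ))^2 :=
    Finset.sum_nonneg (fun t ht => sq_nonneg _)
  have h2 : (0:ℝ) < ((2:ℝ)^n)⁻¹ := by positivity
  nlinarith

lemma expansion : ∀ n : ℕ, ∀ w : ℕ, w ≤ n →
    lam n w = ∑ k ∈ Finset.range (n + 1), lamHat n k * (kraw n k w : ℝ) := by
  intro n
  induction n with
  | zero =>
    intro w hw
    interval_cases w
    rw [Finset.sum_range_one, kraw_zero]
    unfold lam lamHat
    norm_num
  | succ n ih =>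
    have hsmall : ∀ w : ℕ, w ≤ n →
        lam (n+1) w = ∑ k ∈ Finset.range (n+2), lamHat (n+1) k * (kraw (n+1) k w : ℝ) := by
      intro w hw
      rw [Finset.sum_range_succ'
        (fun k => lamHat (n+1) k * (kraw (n+1) k w : ℝ)) (n+1)]
      have h1 : ∀ k ∈ range (n+1),
          lamHat (n+1) (k+1) * (kraw (n+1) (k+1) w : ℝ)
          = lamHat (n+1) (k+1) * (kraw n (k+1) w : ℝ)
            + lamHat (n+1) (k+1) * (kraw n k w : ℝ) := by
        intro k _
        rw [kraw_pascal n k w hw]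
        push_cast
        ring
      rw [Finset.sum_congr rfl h1, Finset.sum_add_distrib]
      have h2 : ∑ k ∈ range (n+1), lamHat (n+1) (k+1) * (kraw n (k+1) w : ℝ)
          = (∑ k ∈ range (n+1), lamHat (n+1) k * (kraw n k w : ℝ))
            - lamHat (n+1) 0 * (kraw n 0 w : ℝ) := by
        have h3 : (∑ k ∈ range (n+1), lamHat (n+1) (k+1) * (kraw n (k+1) w : ℝ))
            + lamHat (n+1) 0 * (kraw n 0 w : ℝ)
            = ∑ k ∈ range (n+2), lamHat (n+1) k * (kraw n k w : ℝ) :=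
          (Finset.sum_range_succ' (fun k => lamHat (n+1) k * (kraw n k w : ℝ)) (n+1)).symm
        have h4 : ∑ k ∈ range (n+2), lamHat (n+1) k * (kraw n k w : ℝ)
            = ∑ k ∈ range (n+1), lamHat (n+1) k * (kraw n k w : ℝ) := by
          rw [Finset.sum_range_succ, kraw_eq_zero n (n+1) w (by omega) hw]
          norm_num
        rw [← h4]
        linarith [h3]
      rw [h2]
      have h5 : kraw (n+1) 0 w = kraw n 0 w := by rw [kraw_zero, kraw_zero]
      rw [h5]
      have h6' : ∑ k ∈ range (n+1), (lamHat (n+1) k + lamHat (n+1) (k+1)) * (kraw n k w : ℝ)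
          = (∑ k ∈ range (n+1), lamHat (n+1) k * (kraw n k w : ℝ))
            + ∑ k ∈ range (n+1), lamHat (n+1) (k+1) * (kraw n k w : ℝ) := by
        rw [← Finset.sum_add_distrib]
        apply Finset.sum_congr rfl
        intro k _
        ring
      have h6 : (∑ k ∈ range (n+1), lamHat (n+1) k * (kraw n k w : ℝ))
          - lamHat (n+1) 0 * (kraw n 0 w : ℝ)
          + ∑ k ∈ range (n+1), lamHat (n+1) (k+1) * (kraw n k w : ℝ)
          + lamHat (n+1) 0 * (kraw n 0 w : ℝ)
          = ∑ k ∈ range (n+1), (lamHat (n+1) k + lamHat (n+1) (k+1)) * (kraw n k w : ℝ) := by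
        rw [h6']
        ring
      rw [h6]
      have h7 : ∀ k ∈ range (n+1),
          (lamHat (n+1) k + lamHat (n+1) (k+1)) * (kraw n k w : ℝ)
          = 2 * (lamHat n k * (kraw n k w : ℝ)) := by
        intro k hk
        rw [Finset.mem_range] at hk
        rw [lamHat_pair n k (by omega)]
        ring
      rw [Finset.sum_congr rfl h7, ← Finset.mul_sum, ← ih w hw, lam_double n w hw]
    intro w hw
    rcases eq_or_lt_of_le hw with rfl | hlt
    · -- w = n+1
      have key1 : ∑ w ∈ range (n+2), (Nat.choose (n+1) w : ℝ)
            * (∑ k ∈ range (n+2), lamHat (n+1) k * (kraw (n+1) k w : ℝ))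
          = 2^(n+1) * lamHat (n+1) 0 := by
        have e1 : ∀ w ∈ range (n+2), (Nat.choose (n+1) w : ℝ)
              * (∑ k ∈ range (n+2), lamHat (n+1) k * (kraw (n+1) k w : ℝ))
            = ∑ k ∈ range (n+2), lamHat (n+1) k
                * ((Nat.choose (n+1) w : ℝ) * (kraw (n+1) k w : ℝ)) := by
          intro w _
          rw [Finset.mul_sum]
          apply Finset.sum_congr rfl
          intro k _
          ring
        rw [Finset.sum_congr rfl e1, Finset.sum_comm]
        have e2 : ∀ k ∈ range (n+2),
            ∑ w ∈ range (n+2), lamHat (n+1) k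
              * ((Nat.choose (n+1) w : ℝ) * (kraw (n+1) k w : ℝ))
            = lamHat (n+1) k
              * ∑ w ∈ range (n+2), (Nat.choose (n+1) w : ℝ) * (kraw (n+1) k w : ℝ) := by
          intro k _
          rw [Finset.mul_sum]
        rw [Finset.sum_congr rfl e2]
        rw [Finset.sum_range_succ' (fun k => lamHat (n+1) k
          * ∑ w ∈ range (n+2), (Nat.choose (n+1) w : ℝ) * (kraw (n+1) k w : ℝ)) (n+1)]
        have e3 : ∀ k ∈ range (n+1), lamHat (n+1) (k+1)
            * (∑ w ∈ range (n+2), (Nat.choose (n+1) w : ℝ) * (kraw (n+1) (k+1) w : ℝ)) = 0 := by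
          intro k _
          have hz := S_zero (n+1) (k+1) (by omega)
          have hzc : ∑ w ∈ range (n+2), (Nat.choose (n+1) w : ℝ) * (kraw (n+1) (k+1) w : ℝ)
              = 0 := by
            have := congrArg (fun x : ℤ => (x : ℝ)) hz
            push_cast at this
            convert this using 2
          rw [hzc, mul_zero]
        rw [Finset.sum_congr rfl e3, Finset.sum_const, smul_zero, zero_add]
        have e4 : ∑ w ∈ range (n+2), (Nat.choose (n+1) w : ℝ) * (kraw (n+1) 0 w : ℝ)
            = 2^(n+1) := by
          have : ∀ w ∈ range (n+2), (Nat.choose (n+1) w : ℝ) * (kraw (n+1) 0 w : ℝ)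
              = (Nat.choose (n+1) w : ℝ) := by
            intro w _
            rw [kraw_zero]
            push_cast
            ring
          rw [Finset.sum_congr rfl this]
          rw [← Nat.cast_sum]
          rw [Nat.sum_range_choose]
          push_cast
          ring
        rw [e4]
        ring
      have key2 := lam_weighted (n+1)
      have key3 : ∑ w ∈ range (n+2), (Nat.choose (n+1) w : ℝ)
          * (lam (n+1) w - ∑ k ∈ range (n+2), lamHat (n+1) k * (kraw (n+1) k w : ℝ)) = 0 := by
        have : ∀ w ∈ range (n+2), (Nat.choose (n+1) w : ℝ)
            * (lam (n+1) w - ∑ k ∈ range (n+2), lamHat (n+1) k * (kraw (n+1) k w : ℝ))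
            = (Nat.choose (n+1) w : ℝ) * lam (n+1) w
              - (Nat.choose (n+1) w : ℝ)
                * ∑ k ∈ range (n+2), lamHat (n+1) k * (kraw (n+1) k w : ℝ) := by
          intro w _
          ring
        rw [Finset.sum_congr rfl this, Finset.sum_sub_distrib, key1, key2]
        ring
      rw [Finset.sum_range_succ] at key3
      have hzero : ∑ w ∈ range (n+1), (Nat.choose (n+1) w : ℝ)
          * (lam (n+1) w - ∑ k ∈ range (n+2), lamHat (n+1) k * (kraw (n+1) k w : ℝ)) = 0 := by
        apply Finset.sum_eq_zero
        intro w hw'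
        rw [Finset.mem_range] at hw'
        rw [← hsmall w (by omega)]
        ring_nf
      rw [hzero, zero_add, Nat.choose_self] at key3
      push_cast at key3
      linarith [key3]
    · exact hsmall w (by omega)

/-- Krawtchouk expansion of the kernel `λ`: for every `w ∈ {0,…,n}`,
`λ(w) = Σ_{k=0}^n λ̂_k·K_k^{(n)}(w)`; moreover `λ̂_k ≤ 0` for `1 ≤ k ≤ n`, i.e. the kernel
`−λ` is positive definite up to an additive constant. -/
theorem lambda_krawtchouk_expansion (n : ℕ) :
    (∀ w : ℕ, w ≤ n →
      lam n w = ∑ k ∈ Finset.range (n + 1), lamHat n k * (kraw n k w : ℝ))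
    ∧ (∀ k : ℕ, 1 ≤ k → k ≤ n → lamHat n k ≤ 0) := by
  exact ⟨expansion n, fun k hk _ => lamHat_nonpos n k hk⟩
end

section
/- For every integer n ≥ 1 and every k with 1 ≤ k ≤ n, the identity Σ_{t=0}^{n−1} (K_t^{(n−1)}(k−1))² = − Σ_{w=1}^n λ(w)·K_w^{(n)}(k) holds, where λ(w) = 2^{n−w}·w·C(w−1, ⌈w/2⌉−1). -/
open Polynomial Finset

lemma coeff_one_sub_X_pow (k i : ℕ) :
    ((1 - X : ℤ[X]) ^ k).coeff i = (-1) ^ i * (k.choose i : ℤ) := by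
  have h : (1 - X : ℤ[X]) ^ k
      = ∑ j ∈ range (k + 1), C ((-1) ^ j * (k.choose j : ℤ)) * X ^ j := by
    have : (1 - X : ℤ[X]) = -X + 1 := by ring
    rw [this, add_pow]
    refine Finset.sum_congr rfl fun j _ => ?_
    rw [neg_pow, one_pow]
    simp [C_mul, C_pow]
    ring
  rw [h, finset_sum_coeff]
  simp only [coeff_C_mul, coeff_X_pow]
  rw [Finset.sum_eq_single i]
  · simp
  · intro j _ hj; simp [Ne.symm hj]
  · intro h'
    simp only [Finset.mem_range, not_lt] at h'
    have : k.choose i = 0 := Nat.choose_eq_zero_of_lt (by omega)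
    simp [this]


lemma krawCoeff (n k w : ℕ) :
    ((1 - X : ℤ[X]) ^ k * (1 + X) ^ (n - k)).coeff w = kraw n w k := by
  rw [coeff_mul, Finset.Nat.sum_antidiagonal_eq_sum_range_succ_mk, kraw]
  refine Finset.sum_congr rfl fun i _ => ?_
  rw [coeff_one_sub_X_pow, coeff_one_add_X_pow]

lemma lemT (m : ℕ) : ∀ J : ℕ,
    ∑ i ∈ range (J + 1), (((m : ℤ) + 1) - 2 * i) * ((m + 1).choose i : ℤ)
      = ((m : ℤ) + 1) * (m.choose J : ℤ) := by
  intro J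
  induction J with
  | zero => simp
  | succ J ih =>
    rw [Finset.sum_range_succ, ih]
    have h1 : (m + 1).choose (J + 1) = m.choose J + m.choose (J + 1) :=
      Nat.choose_succ_succ m J
    have h2 := Nat.add_one_mul_choose_eq m J
    have h1' : ((m + 1).choose (J + 1) : ℤ) = (m.choose J : ℤ) + (m.choose (J + 1) : ℤ) := by
      exact_mod_cast h1
    have h2' : ((m : ℤ) + 1) * (m.choose J : ℤ) = ((m + 1).choose (J + 1) : ℤ) * ((J : ℤ) + 1) := by
      exact_mod_cast h2
    push_cast
    linear_combination h1' * ((m : ℤ) + 1) + 2 * h2'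

lemma natDeg_bound (a b : ℕ) :
    ((1 - X : ℤ[X]) ^ a * (1 + X) ^ b).natDegree ≤ a + b := by
  refine natDegree_mul_le.trans (add_le_add ?_ ?_)
  · exact natDegree_pow_le.trans (by
      have : (1 - X : ℤ[X]).natDegree ≤ 1 :=
        (natDegree_sub_le _ _).trans (by simp)
      nlinarith)
  · exact natDegree_pow_le.trans (by
      have : (1 + X : ℤ[X]).natDegree ≤ 1 :=
        (natDegree_add_le _ _).trans (by simp)
      nlinarith)

lemma deg_one_sub : (1 - X : ℤ[X]).natDegree ≤ 1 :=
  (natDegree_sub_le _ _).trans (by simp)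

lemma deg_one_add : (1 + X : ℤ[X]).natDegree ≤ 1 :=
  (natDegree_add_le _ _).trans (by simp)

lemma refl_one_sub : reflect 1 (1 - X : ℤ[X]) = X - 1 := by
  have h : (1 - X : ℤ[X]) = C 1 * X ^ 0 + C (-1) * X ^ 1 := by
    simp only [C_1, C_neg, pow_zero, pow_one, one_mul]
    ring
  rw [h, reflect_add, reflect_C_mul_X_pow, reflect_C_mul_X_pow]
  norm_num [revAt_le]
  ring

lemma refl_one_add : reflect 1 (1 + X : ℤ[X]) = X + 1 := by
  have h : (1 + X : ℤ[X]) = C 1 * X ^ 0 + C 1 * X ^ 1 := by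
    simp only [C_1, pow_zero, pow_one, one_mul]
  rw [h, reflect_add, reflect_C_mul_X_pow, reflect_C_mul_X_pow]
  norm_num [revAt_le]

lemma pow_deg_le (f : ℤ[X]) (hf : f.natDegree ≤ 1) (k : ℕ) : (f ^ k).natDegree ≤ k := by
  have h1 := natDegree_pow_le (p := f) (n := k)
  have h2 := Nat.mul_le_mul_left k hf
  omega

lemma refl_pow (f : ℤ[X]) (hf : f.natDegree ≤ 1) : ∀ k : ℕ,
    reflect k (f ^ k) = (reflect 1 f) ^ k := by
  intro k
  induction k with
  | zero =>
    rw [pow_zero, pow_zero, ← C_1, reflect_C, pow_zero, mul_one]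
  | succ k ih =>
    have h : f ^ (k + 1) = f * f ^ k := by ring
    rw [h, show k + 1 = 1 + k by ring,
      reflect_mul f (f ^ k) hf (pow_deg_le f hf k), ih]
    ring

lemma reflectP (a b : ℕ) :
    reflect (a + b) ((1 - X : ℤ[X]) ^ a * (1 + X) ^ b) = (X - 1) ^ a * (X + 1) ^ b := by
  rw [reflect_mul _ _ (pow_deg_le _ deg_one_sub a) (pow_deg_le _ deg_one_add b),
    refl_pow _ deg_one_sub a, refl_pow _ deg_one_add b, refl_one_sub, refl_one_add]

lemma krawRev (n k v : ℕ) (hv : v ≤ n) (hk : k ≤ n) :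
    kraw n (n - v) k = (-1) ^ k * kraw n v k := by
  rw [← krawCoeff, ← krawCoeff]
  have h1 : ((1 - X : ℤ[X]) ^ k * (1 + X) ^ (n - k)).coeff (n - v)
      = (reflect n ((1 - X : ℤ[X]) ^ k * (1 + X) ^ (n - k))).coeff v := by
    rw [coeff_reflect, revAt_le hv]
  have h3 : reflect n ((1 - X : ℤ[X]) ^ k * (1 + X) ^ (n - k))
      = (X - 1) ^ k * (X + 1) ^ (n - k) := by
    have := reflectP k (n - k)
    rwa [show k + (n - k) = n by omega] at this
  rw [h1, h3]
  have h4 : ((X : ℤ[X]) - 1) ^ k * (X + 1) ^ (n - k)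
      = C ((-1) ^ k) * ((1 - X) ^ k * (1 + X) ^ (n - k)) := by
    rw [show ((X : ℤ[X]) - 1) = -1 * (1 - X) by ring, mul_pow]
    simp only [← C_1, ← C_neg, ← C_pow]
    ring
  rw [h4, coeff_C_mul]


lemma lemA (n v : ℕ) (hv : v ≤ n) :
    ∑ j ∈ range n, ((n - j : ℕ) : ℤ) * (((2 * X : ℤ[X])) ^ v * (1 + X ^ 2) ^ (n - v)).coeff j
      = 2 ^ v * ((n - v : ℕ) : ℤ) * ((n - v - 1).choose ((n - v + 1) / 2 - 1) : ℤ) := by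
  set M := n - v with hM
  clear_value M
  have hexp : (2 * X : ℤ[X]) ^ v * (1 + X ^ 2) ^ M
      = ∑ i ∈ range (M + 1), C ((2 : ℤ) ^ v * (M.choose i : ℤ)) * X ^ (v + 2 * i) := by
    rw [add_comm (1 : ℤ[X]), add_pow, Finset.mul_sum]
    refine Finset.sum_congr rfl fun i _ => ?_
    simp only [C_mul, C_pow, C_eq_natCast, one_pow, mul_one, map_ofNat]
    push_cast
    ring
  rw [hexp]
  simp only [finset_sum_coeff, coeff_C_mul, coeff_X_pow, Finset.mul_sum]
  rw [Finset.sum_comm]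
  have step1 : ∀ i ∈ range (M + 1),
      (∑ j ∈ range n, ((n - j : ℕ) : ℤ) * ((2 : ℤ) ^ v * (M.choose i : ℤ) * if j = v + 2 * i then 1 else 0))
        = (if v + 2 * i ∈ range n then ((n - (v + 2 * i) : ℕ) : ℤ) * ((2 : ℤ) ^ v * (M.choose i : ℤ)) else 0) := by
    intro i _
    rw [← Finset.sum_ite_eq' (range n) (v + 2 * i)
      (fun j => ((n - j : ℕ) : ℤ) * ((2 : ℤ) ^ v * (M.choose i : ℤ)))]
    refine Finset.sum_congr rfl fun j _ => ?_
    by_cases h : j = v + 2 * i <;> simp [h]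
  rw [Finset.sum_congr rfl step1]
  have hsub : range ((M + 1) / 2) ⊆ range (M + 1) := by
    apply Finset.range_subset_range.2; omega
  rw [← Finset.sum_subset hsub ?_]
  · -- main sum over range ((M+1)/2)
    rcases Nat.eq_zero_or_pos M with hM0 | hMpos
    · simp [hM0]
    · obtain ⟨m, rfl⟩ : ∃ m, M = m + 1 := ⟨M - 1, by omega⟩
      have hJ : (m + 1 + 1) / 2 = ((m + 1 + 1) / 2 - 1) + 1 := by omega
      set J := (m + 1 + 1) / 2 - 1 with hJdef
      rw [hJ]
      have step2 : ∀ i ∈ range (J + 1),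
          (if v + 2 * i ∈ range n then ((n - (v + 2 * i) : ℕ) : ℤ) * ((2 : ℤ) ^ v * ((m + 1).choose i : ℤ)) else 0)
            = 2 ^ v * ((((m : ℤ) + 1) - 2 * i) * ((m + 1).choose i : ℤ)) := by
        intro i hi
        simp only [Finset.mem_range] at hi
        have hin : v + 2 * i ∈ range n := by
          simp only [Finset.mem_range]; omega
        rw [if_pos hin]
        have hcast : ((n - (v + 2 * i) : ℕ) : ℤ) = ((m : ℤ) + 1) - 2 * i := by omega
        rw [hcast]; ring
      rw [Finset.sum_congr rfl step2, ← Finset.mul_sum, lemT m J]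
      rw [show m + 1 - 1 = m by omega]
      push_cast
      ring
  · intro x hx hxn
    simp only [Finset.mem_range] at hx hxn
    have : v + 2 * x ∉ range n := by
      simp only [Finset.mem_range]; omega
    rw [if_neg this]


lemma degQ (a b : ℕ) : ((1 - X : ℤ[X]) ^ a * (1 + X) ^ b).natDegree ≤ a + b :=
  natDegree_mul_le.trans (add_le_add (pow_deg_le _ deg_one_sub a) (pow_deg_le _ deg_one_add b))

lemma lemB0 (n : ℕ) :
    ∑ v ∈ range (n + 1), C (((1 + X : ℤ[X]) ^ n).coeff v) * (2 * X) ^ v * (1 + X ^ 2) ^ (n - v)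
      = (1 + X) ^ (2 * n) := by
  induction n with
  | zero => simp
  | succ n ih =>
    have hsplit : (1 + X : ℤ[X]) ^ (n + 1) = (1 + X) ^ n + X * (1 + X) ^ n := by ring
    have hcoeff : ∀ v, ((1 + X : ℤ[X]) ^ (n + 1)).coeff v
        = ((1 + X : ℤ[X]) ^ n).coeff v + (X * (1 + X : ℤ[X]) ^ n).coeff v := by
      intro v; rw [hsplit, coeff_add]
    calc ∑ v ∈ range (n + 2), C (((1 + X : ℤ[X]) ^ (n + 1)).coeff v) * (2 * X) ^ v * (1 + X ^ 2) ^ (n + 1 - v)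
        = (∑ v ∈ range (n + 2), C (((1 + X : ℤ[X]) ^ n).coeff v) * (2 * X) ^ v * (1 + X ^ 2) ^ (n + 1 - v))
          + ∑ v ∈ range (n + 2), C ((X * (1 + X : ℤ[X]) ^ n).coeff v) * (2 * X) ^ v * (1 + X ^ 2) ^ (n + 1 - v) := by
          rw [← Finset.sum_add_distrib]
          refine Finset.sum_congr rfl fun v _ => ?_
          rw [hcoeff, C_add]; ring
      _ = (1 + X ^ 2) * (1 + X) ^ (2 * n) + 2 * X * (1 + X) ^ (2 * n) := by
          congr 1
          · rw [Finset.sum_range_succ]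
            have hz : ((1 + X : ℤ[X]) ^ n).coeff (n + 1) = 0 :=
              coeff_eq_zero_of_natDegree_lt (by
                have := pow_deg_le (1 + X : ℤ[X]) deg_one_add n; omega)
            rw [hz, C_0, zero_mul, zero_mul, add_zero, ← ih, Finset.mul_sum]
            refine Finset.sum_congr rfl fun v hv => ?_
            simp only [Finset.mem_range] at hv
            rw [show n + 1 - v = (n - v) + 1 by omega, pow_succ]
            ring
          · rw [Finset.sum_range_succ']
            have hz0 : (X * (1 + X : ℤ[X]) ^ n).coeff 0 = 0 := by
              rw [mul_coeff_zero, coeff_X_zero, zero_mul]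
            rw [hz0, C_0, zero_mul, zero_mul, add_zero, ← ih, Finset.mul_sum]
            refine Finset.sum_congr rfl fun v hv => ?_
            rw [coeff_X_mul, show n + 1 - (v + 1) = n - v by omega]
            ring
      _ = (1 + X) ^ (2 * (n + 1)) := by ring

lemma lemB : ∀ (k n : ℕ), k ≤ n →
    ∑ v ∈ range (n + 1), C (((1 - X : ℤ[X]) ^ k * (1 + X) ^ (n - k)).coeff v) * (2 * X) ^ v * (1 + X ^ 2) ^ (n - v)
      = (1 - X) ^ (2 * k) * (1 + X) ^ (2 * (n - k)) := by
  intro k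
  induction k with
  | zero =>
    intro n _
    simp only [pow_zero, one_mul, Nat.sub_zero, Nat.zero_sub, mul_zero]
    rw [lemB0]
  | succ k ih =>
    intro n hk
    obtain ⟨m, rfl⟩ : ∃ m, n = m + 1 := ⟨n - 1, by omega⟩
    have hk' : k ≤ m := by omega
    have hQ : (1 - X : ℤ[X]) ^ (k + 1) * (1 + X) ^ (m + 1 - (k + 1))
        = ((1 - X) ^ k * (1 + X) ^ (m - k)) - X * ((1 - X) ^ k * (1 + X) ^ (m - k)) := by
      rw [show m + 1 - (k + 1) = m - k by omega]; ring
    set Q : ℤ[X] := (1 - X) ^ k * (1 + X) ^ (m - k) with hQdef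
    have hcoeff : ∀ v, ((1 - X : ℤ[X]) ^ (k + 1) * (1 + X) ^ (m + 1 - (k + 1))).coeff v
        = Q.coeff v - (X * Q).coeff v := by
      intro v; rw [hQ, coeff_sub]
    have ihm := ih m hk'
    calc _
        = (∑ v ∈ range (m + 2), C (Q.coeff v) * (2 * X) ^ v * (1 + X ^ 2) ^ (m + 1 - v))
          - ∑ v ∈ range (m + 2), C ((X * Q).coeff v) * (2 * X) ^ v * (1 + X ^ 2) ^ (m + 1 - v) := by
          rw [← Finset.sum_sub_distrib]
          refine Finset.sum_congr rfl fun v _ => ?_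
          rw [hcoeff, C_sub]; ring
      _ = (1 + X ^ 2 : ℤ[X]) * ((1 - X) ^ (2 * k) * (1 + X) ^ (2 * (m - k)))
          - 2 * X * ((1 - X) ^ (2 * k) * (1 + X) ^ (2 * (m - k))) := by
          congr 1
          · rw [Finset.sum_range_succ]
            have hz : Q.coeff (m + 1) = 0 :=
              coeff_eq_zero_of_natDegree_lt (by
                have h := degQ k (m - k); rw [← hQdef] at h; omega)
            rw [hz, C_0, zero_mul, zero_mul, add_zero, ← ihm, Finset.mul_sum]
            refine Finset.sum_congr rfl fun v hv => ?_
            simp only [Finset.mem_range] at hv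
            rw [show m + 1 - v = (m - v) + 1 by omega, pow_succ]
            ring
          · rw [Finset.sum_range_succ']
            have hz0 : (X * Q).coeff 0 = 0 := by
              rw [mul_coeff_zero, coeff_X_zero, zero_mul]
            rw [hz0, C_0, zero_mul, zero_mul, add_zero, ← ihm, Finset.mul_sum]
            refine Finset.sum_congr rfl fun v hv => ?_
            rw [coeff_X_mul, show m + 1 - (v + 1) = m - v by omega]
            ring
      _ = (1 - X : ℤ[X]) ^ (2 * (k + 1)) * (1 + X) ^ (2 * (m + 1 - (k + 1))) := by
          rw [show m + 1 - (k + 1) = m - k by omega]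
          ring

lemma Elem (n : ℕ) :
    (∑ d ∈ range n, C ((d : ℤ) + 1) * X ^ d) * (1 - X) ^ 2
      = 1 - C ((n : ℤ) + 1) * X ^ n + C (n : ℤ) * X ^ (n + 1) := by
  induction n with
  | zero => simp
  | succ n ih =>
    rw [Finset.sum_range_succ, add_mul, ih]
    push_cast
    simp only [C_add, C_1]
    ring

lemma Lfun (m : ℕ) (F : ℤ[X]) :
    ((∑ d ∈ range (m + 1), C ((d : ℤ) + 1) * X ^ d) * F).coeff m
      = ∑ j ∈ range (m + 1), ((m + 1 - j : ℕ) : ℤ) * F.coeff j := by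
  rw [coeff_mul, Finset.Nat.sum_antidiagonal_eq_sum_range_succ_mk]
  have hG : ∀ i, i ≤ m → (∑ d ∈ range (m + 1), C ((d : ℤ) + 1) * X ^ d).coeff i = (i : ℤ) + 1 := by
    intro i hi
    rw [finset_sum_coeff]
    simp only [coeff_C_mul, coeff_X_pow]
    rw [Finset.sum_eq_single i]
    · simp
    · intro d _ hd; simp [Ne.symm hd]
    · intro h; simp at h; omega
  have key : ∀ i ∈ range (m + 1),
      (∑ d ∈ range (m + 1), C ((d : ℤ) + 1) * X ^ d).coeff i * F.coeff (m - i)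
        = (fun j => ((m + 1 - j : ℕ) : ℤ) * F.coeff j) (m + 1 - 1 - i) := by
    intro i hi
    simp only [Finset.mem_range] at hi
    rw [hG i (by omega)]
    simp only []
    rw [show m + 1 - 1 - i = m - i by omega]
    congr 1
    have : ((m + 1 - (m - i) : ℕ) : ℤ) = (i : ℤ) + 1 := by omega
    rw [this]
  rw [Finset.sum_congr rfl key]
  exact Finset.sum_range_reflect (fun j => ((m + 1 - j : ℕ) : ℤ) * F.coeff j) (m + 1)

lemma LfunH (m a b : ℕ) :
    ∑ j ∈ range (m + 1), ((m + 1 - j : ℕ) : ℤ)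
        * ((1 - X : ℤ[X]) ^ (2 * (a + 1)) * (1 + X) ^ b).coeff j
      = ((1 - X : ℤ[X]) ^ (2 * a) * (1 + X) ^ b).coeff m := by
  set H : ℤ[X] := (1 - X) ^ (2 * a) * (1 + X) ^ b with hH
  have hF : (1 - X : ℤ[X]) ^ (2 * (a + 1)) * (1 + X) ^ b = (1 - X) ^ 2 * H := by
    rw [hH]; ring
  rw [hF, ← Lfun m ((1 - X : ℤ[X]) ^ 2 * H)]
  have hassoc : (∑ d ∈ range (m + 1), C ((d : ℤ) + 1) * X ^ d) * ((1 - X : ℤ[X]) ^ 2 * H)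
      = ((∑ d ∈ range (m + 1), C ((d : ℤ) + 1) * X ^ d) * (1 - X) ^ 2) * H := by ring
  rw [hassoc, Elem (m + 1)]
  have key : ∀ (c : ℤ) (p : ℕ), m < p → (C c * X ^ p * H).coeff m = 0 := by
    intro c p hp
    have h : C c * X ^ p * H = C c * (H * X ^ p) := by ring
    rw [h, coeff_C_mul, coeff_mul_X_pow', if_neg (by omega), mul_zero]
  rw [add_mul, sub_mul, one_mul, coeff_add, coeff_sub,
    key _ _ (by omega), key _ _ (by omega), sub_zero, add_zero]

/-- For `n ≥ 1` and `1 ≤ k ≤ n`,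
`Σ_{t=0}^{n−1} (K_t^{(n−1)}(k−1))² = −Σ_{w=1}^n λ(w)·K_w^{(n)}(k)` where
`λ(w) = 2^{n−w}·w·C(w−1,⌈w/2⌉−1)`. -/
theorem krawtchouk_square_sum_identity (n k : ℕ) (hn : 1 ≤ n) (hk1 : 1 ≤ k) (hk2 : k ≤ n) :
    ∑ t ∈ Finset.range n, (kraw (n - 1) t (k - 1)) ^ 2
      = -∑ w ∈ Finset.Icc 1 n,
          (2 ^ (n - w) * w * Nat.choose (w - 1) ((w + 1) / 2 - 1) : ℤ) * kraw n w k := by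
  obtain ⟨m, rfl⟩ : ∃ m, n = m + 1 := ⟨n - 1, by omega⟩
  obtain ⟨a, rfl⟩ : ∃ a, k = a + 1 := ⟨k - 1, by omega⟩
  have ham : a ≤ m := by omega
  simp only [Nat.add_sub_cancel]
  set Q : ℤ[X] := (1 - X) ^ a * (1 + X) ^ (m - a) with hQ
  set H : ℤ[X] := (1 - X) ^ (2 * a) * (1 + X) ^ (2 * (m - a)) with hHdef
  -- LHS computation
  have hQc : ∀ t, kraw m t a = Q.coeff t := fun t => (krawCoeff m a t).symm
  have hL1 : ∑ t ∈ range (m + 1), kraw m t a ^ 2 = (Q * reflect m Q).coeff m := by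
    rw [coeff_mul, Finset.Nat.sum_antidiagonal_eq_sum_range_succ_mk]
    refine Finset.sum_congr rfl fun i hi => ?_
    simp only [Finset.mem_range] at hi
    rw [hQc, coeff_reflect, revAt_le (show m - i ≤ m by omega),
      show m - (m - i) = i by omega, sq]
  have hrefl : reflect m Q = (X - 1) ^ a * (X + 1) ^ (m - a) := by
    have h := reflectP a (m - a)
    rwa [show a + (m - a) = m by omega] at h
  have hQR : Q * ((X - 1) ^ a * (X + 1) ^ (m - a)) = C ((-1) ^ a) * H := by
    rw [hQ, hHdef, show (X - 1 : ℤ[X]) = -1 * (1 - X) by ring, mul_pow, C_pow, map_neg, C_1]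
    ring
  have hLHS : ∑ t ∈ range (m + 1), kraw m t a ^ 2 = (-1) ^ a * H.coeff m := by
    rw [hL1, hrefl, hQR, coeff_C_mul]
  -- RHS : step 2 (weighted coefficient sum of F equals T')
  have hk2' : a + 1 ≤ m + 1 := by omega
  have hPk : ∀ v, ((1 - X : ℤ[X]) ^ (a + 1) * (1 + X) ^ (m - a)).coeff v
      = kraw (m + 1) v (a + 1) := by
    intro v
    have h := krawCoeff (m + 1) (a + 1) v
    rwa [show m + 1 - (a + 1) = m - a by omega] at h
  have hT2 : ∑ j ∈ range (m + 1), ((m + 1 - j : ℕ) : ℤ)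
        * ((1 - X : ℤ[X]) ^ (2 * (a + 1)) * (1 + X) ^ (2 * (m - a))).coeff j
      = ∑ v ∈ range (m + 1),
          (2 ^ v * ((m + 1 - v : ℕ) : ℤ) * ((m + 1 - v - 1).choose ((m + 1 - v + 1) / 2 - 1) : ℤ))
            * kraw (m + 1) v (a + 1) := by
    have hF : (1 - X : ℤ[X]) ^ (2 * (a + 1)) * (1 + X) ^ (2 * (m - a))
        = ∑ v ∈ range (m + 2),
            C (((1 - X : ℤ[X]) ^ (a + 1) * (1 + X) ^ (m - a)).coeff v)
              * (2 * X) ^ v * (1 + X ^ 2) ^ (m + 1 - v) := by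
      have h := lemB (a + 1) (m + 1) hk2'
      rw [show m + 1 - (a + 1) = m - a by omega] at h
      exact h.symm
    rw [hF]
    have hbig : ∑ j ∈ range (m + 1), ((m + 1 - j : ℕ) : ℤ)
          * (∑ v ∈ range (m + 2),
              C (((1 - X : ℤ[X]) ^ (a + 1) * (1 + X) ^ (m - a)).coeff v)
                * (2 * X) ^ v * (1 + X ^ 2) ^ (m + 1 - v)).coeff j
        = ∑ v ∈ range (m + 2),
            (((1 - X : ℤ[X]) ^ (a + 1) * (1 + X) ^ (m - a)).coeff v)
              * ∑ j ∈ range (m + 1), ((m + 1 - j : ℕ) : ℤ)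
                  * ((2 * X : ℤ[X]) ^ v * (1 + X ^ 2) ^ (m + 1 - v)).coeff j := by
      simp only [finset_sum_coeff, mul_assoc, coeff_C_mul, Finset.mul_sum]
      rw [Finset.sum_comm]
      exact Finset.sum_congr rfl fun v _ => Finset.sum_congr rfl fun j _ => by ring
    rw [hbig]
    have hinner : ∀ v ∈ range (m + 2),
        (((1 - X : ℤ[X]) ^ (a + 1) * (1 + X) ^ (m - a)).coeff v)
            * (∑ j ∈ range (m + 1), ((m + 1 - j : ℕ) : ℤ)
                * ((2 * X : ℤ[X]) ^ v * (1 + X ^ 2) ^ (m + 1 - v)).coeff j)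
          = (2 ^ v * ((m + 1 - v : ℕ) : ℤ)
              * ((m + 1 - v - 1).choose ((m + 1 - v + 1) / 2 - 1) : ℤ))
              * kraw (m + 1) v (a + 1) := by
      intro v hv
      simp only [Finset.mem_range] at hv
      rw [lemA (m + 1) v (by omega), hPk]
      ring
    rw [Finset.sum_congr rfl hinner, Finset.sum_range_succ]
    simp
  -- RHS : step 1 (reindex the Icc sum)
  have hsq : ((-1 : ℤ)) ^ (a + 1) * (-1) ^ (a + 1) = 1 := by
    rw [← pow_add]
    exact Even.neg_one_pow ⟨a + 1, by ring⟩
  have hS1 : ∑ w ∈ Finset.Icc 1 (m + 1),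
        (2 ^ (m + 1 - w) * w * Nat.choose (w - 1) ((w + 1) / 2 - 1) : ℤ) * kraw (m + 1) w (a + 1)
      = (-1) ^ (a + 1) * ∑ v ∈ range (m + 1),
          (2 ^ v * ((m + 1 - v : ℕ) : ℤ) * ((m + 1 - v - 1).choose ((m + 1 - v + 1) / 2 - 1) : ℤ))
            * kraw (m + 1) v (a + 1) := by
    rw [← Finset.Ico_add_one_right_eq_Icc, Finset.sum_Ico_eq_sum_range,
      show m + 1 + 1 - 1 = m + 1 by omega]
    have key : ∀ i ∈ range (m + 1),
        (2 ^ (m + 1 - (1 + i)) * ((1 + i : ℕ) : ℤ)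
            * Nat.choose (1 + i - 1) ((1 + i + 1) / 2 - 1) : ℤ) * kraw (m + 1) (1 + i) (a + 1)
          = (-1) ^ (a + 1) * ((2 ^ (m - i) * ((m + 1 - (m - i) : ℕ) : ℤ)
              * ((m + 1 - (m - i) - 1).choose ((m + 1 - (m - i) + 1) / 2 - 1) : ℤ))
              * kraw (m + 1) (m - i) (a + 1)) := by
      intro i hi
      simp only [Finset.mem_range] at hi
      rw [show m - i = m + 1 - (1 + i) by omega,
        krawRev (m + 1) (a + 1) (1 + i) (by omega) (by omega),
        show m + 1 - (m + 1 - (1 + i)) = 1 + i by omega,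
        show 1 + i - 1 = i by omega]
      rw [show m + 1 - (1 + i) = m - i by omega]
      rw [show 1 + i + 1 = i + 2 by omega]
      linear_combination (-(((2 : ℤ) ^ (m - i) * ((1 + i : ℕ) : ℤ)
        * (Nat.choose i ((i + 2) / 2 - 1) : ℤ)) * kraw (m + 1) (1 + i) (a + 1))) * hsq
    calc ∑ i ∈ range (m + 1),
          (2 ^ (m + 1 - (1 + i)) * ((1 + i : ℕ) : ℤ)
            * Nat.choose (1 + i - 1) ((1 + i + 1) / 2 - 1) : ℤ) * kraw (m + 1) (1 + i) (a + 1)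
        = ∑ i ∈ range (m + 1), (-1) ^ (a + 1)
            * ((2 ^ (m - i) * ((m + 1 - (m - i) : ℕ) : ℤ)
              * ((m + 1 - (m - i) - 1).choose ((m + 1 - (m - i) + 1) / 2 - 1) : ℤ))
              * kraw (m + 1) (m - i) (a + 1)) := Finset.sum_congr rfl key
      _ = (-1) ^ (a + 1) * ∑ i ∈ range (m + 1),
            (2 ^ (m - i) * ((m + 1 - (m - i) : ℕ) : ℤ)
              * ((m + 1 - (m - i) - 1).choose ((m + 1 - (m - i) + 1) / 2 - 1) : ℤ))
              * kraw (m + 1) (m - i) (a + 1) := by rw [← Finset.mul_sum]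
      _ = (-1) ^ (a + 1) * ∑ v ∈ range (m + 1),
            (2 ^ v * ((m + 1 - v : ℕ) : ℤ)
              * ((m + 1 - v - 1).choose ((m + 1 - v + 1) / 2 - 1) : ℤ))
              * kraw (m + 1) v (a + 1) := by
            congr 1
            exact Finset.sum_range_reflect (fun v =>
              (2 ^ v * ((m + 1 - v : ℕ) : ℤ)
                * ((m + 1 - v - 1).choose ((m + 1 - v + 1) / 2 - 1) : ℤ))
                * kraw (m + 1) v (a + 1)) (m + 1)
  -- step 3
  have h3 := LfunH m a (2 * (m - a))
  rw [← hHdef] at h3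
  rw [hLHS, hS1, ← hT2, h3]
  ring
end
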